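/- (Embeddability criterion.) A partial group M embeds in a group if and only if every word in M is kind; that is, if and only if for all f, g ∈ M and every word w ∈ List M, w ⇝* [f] and w ⇝* [g] imply f = g. -/

import Mathlib

/-- A partial group in Chermak's sense: a nonempty set `M` with a domain `D` of words
containing all words of length at most `1`, a product `Π` (here `pi`, given as a total
function whose axioms only concern words in `D`), and an involution `inv`. -/
structure PartialGroup (M : Type u) where
  /-- The underlying set is nonempty. -/
  nonempty : Nonempty M
  /-- The set of words on which the product is defined. -/
  D : Set (List M)
  /-- The product `Π : D → M` (extended arbitrarily to all words). -/
  pi : List M → M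
  /-- The inversion `x ↦ x⁻¹`. -/
  inv : M → M
  /-- `D` contains all words of length at most `1`. -/
  mem_D_of_length_le_one : ∀ w : List M, w.length ≤ 1 → w ∈ D
  /-- (i) `Π [f] = f`. -/
  pi_single : ∀ f : M, pi [f] = f
  /-- (ii) if `u ++ v ∈ D` then `u ∈ D`. -/
  mem_D_of_append_left : ∀ u v : List M, u ++ v ∈ D → u ∈ D
  /-- (ii) if `u ++ v ∈ D` then `v ∈ D`. -/
  mem_D_of_append_right : ∀ u v : List M, u ++ v ∈ D → v ∈ D
  /-- (iii) if `u ++ v ++ w ∈ D` then `u ++ [Π v] ++ w ∈ D`. -/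
  mem_D_contract : ∀ u v w : List M, u ++ v ++ w ∈ D → u ++ [pi v] ++ w ∈ D
  /-- (iii) if `u ++ v ++ w ∈ D` then `Π (u ++ v ++ w) = Π (u ++ [Π v] ++ w)`. -/
  pi_contract : ∀ u v w : List M, u ++ v ++ w ∈ D → pi (u ++ v ++ w) = pi (u ++ [pi v] ++ w)
  /-- `inv` is an involution. -/
  inv_inv : ∀ x : M, inv (inv x) = x
  /-- (iv) if `w ∈ D` then `w⁻¹ ++ w ∈ D`, where `w⁻¹` is the entrywise-inverted
  reverse of `w`. -/
  mem_D_inv_append : ∀ w ∈ D, (w.reverse.map inv) ++ w ∈ D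
  /-- (iv) if `w ∈ D` then `Π (w⁻¹ ++ w) = 1 = Π []`. -/
  pi_inv_append : ∀ w ∈ D, pi ((w.reverse.map inv) ++ w) = pi []

/-- The formal inverse of a word: reverse it and invert each entry. -/
def PartialGroup.wInv {M : Type u} (P : PartialGroup M) (w : List M) : List M :=
  w.reverse.map P.inv

/-- The single-contraction relation `⇝` on words in a partial group:
`u ++ [a, b] ++ v ⇝ u ++ [Π [a, b]] ++ v` whenever `[a, b] ∈ D`. -/
def PartialGroup.Contract {M : Type u} (P : PartialGroup M) (x y : List M) : Prop :=
  ∃ (u v : List M) (a b : M), [a, b] ∈ P.D ∧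
    x = u ++ [a, b] ++ v ∧ y = u ++ [P.pi [a, b]] ++ v

/-- The reflexive–transitive closure `⇝*` of the single-contraction relation. -/
def PartialGroup.ContractStar {M : Type u} (P : PartialGroup M) : List M → List M → Prop :=
  Relation.ReflTransGen P.Contract

/-- A partial group embeds in a group if there is a group `G` and an injective map
`φ : M → G` with `φ (Π w) = (w.map φ).prod` for every `w ∈ D`. -/
def PartialGroup.EmbedsInGroup {M : Type u} (P : PartialGroup M) : Prop :=
  ∃ (G : Type u) (_ : Group G) (φ : M → G), Function.Injective φ ∧
    ∀ w ∈ P.D, φ (P.pi w) = (w.map φ).prod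

/-- A word `w` is kind if whenever `w ⇝* [f]` and `w ⇝* [g]`, one has `f = g`. -/
def PartialGroup.Kind {M : Type u} (P : PartialGroup M) (w : List M) : Prop :=
  ∀ f g : M, P.ContractStar w [f] → P.ContractStar w [g] → f = g

namespace PartialGroup

variable {M : Type u} (P : PartialGroup M)

/-! ### Basic context lemmas for contraction -/

theorem contract_context {a b : List M} (x y : List M) (h : P.Contract a b) :
    P.Contract (x ++ a ++ y) (x ++ b ++ y) := by
  obtain ⟨u, v, c, d, hD, ha, hb⟩ := h
  exact ⟨x ++ u, v ++ y, c, d, hD, by simp [ha], by simp [hb]⟩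

theorem cstar_context {a b : List M} (x y : List M) (h : P.ContractStar a b) :
    P.ContractStar (x ++ a ++ y) (x ++ b ++ y) :=
  Relation.ReflTransGen.lift (fun w => x ++ w ++ y)
    (fun _ _ h => P.contract_context x y h) _ _ h

theorem cstar_append_right {a b : List M} (y : List M) (h : P.ContractStar a b) :
    P.ContractStar (a ++ y) (b ++ y) := by
  simpa using P.cstar_context [] y h

theorem cstar_append_left {a b : List M} (x : List M) (h : P.ContractStar a b) :
    P.ContractStar (x ++ a) (x ++ b) := by
  simpa using P.cstar_context x [] h

theorem cstar_append2 {a b c d : List M} (h1 : P.ContractStar a b)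
    (h2 : P.ContractStar c d) : P.ContractStar (a ++ c) (b ++ d) :=
  (P.cstar_append_right c h1).trans (P.cstar_append_left b h2)

/-! ### Basic membership and product lemmas -/

theorem mem_singleton_D (x : M) : [x] ∈ P.D := P.mem_D_of_length_le_one _ (by simp)

theorem nil_mem_D : ([] : List M) ∈ P.D := P.mem_D_of_length_le_one _ (by simp)

theorem pair_xe_mem (x : M) : [x, P.pi []] ∈ P.D := by
  simpa using P.mem_D_contract [x] [] [] (by simpa using P.mem_singleton_D x)

theorem pi_pair_xe (x : M) : P.pi [x, P.pi []] = x := by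
  have h := P.pi_contract [x] [] [] (by simpa using P.mem_singleton_D x)
  simp at h
  rw [← h, P.pi_single]

theorem pair_ex_mem (x : M) : [P.pi [], x] ∈ P.D := by
  simpa using P.mem_D_contract [] [] [x] (by simpa using P.mem_singleton_D x)

theorem pi_pair_ex (x : M) : P.pi [P.pi [], x] = x := by
  have h := P.pi_contract [] [] [x] (by simpa using P.mem_singleton_D x)
  simp at h
  rw [← h, P.pi_single]

theorem pair_inv_left_mem (x : M) : [P.inv x, x] ∈ P.D := by
  simpa using P.mem_D_inv_append [x] (P.mem_singleton_D x)

theorem pi_pair_inv_left (x : M) : P.pi [P.inv x, x] = P.pi [] := by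
  simpa using P.pi_inv_append [x] (P.mem_singleton_D x)

theorem pair_inv_right_mem (x : M) : [x, P.inv x] ∈ P.D := by
  have h := P.pair_inv_left_mem (P.inv x); rwa [P.inv_inv] at h

theorem pi_pair_inv_right (x : M) : P.pi [x, P.inv x] = P.pi [] := by
  have h := P.pi_pair_inv_left (P.inv x); rwa [P.inv_inv] at h

theorem contract_pair {a b : M} (u v : List M) (h : [a, b] ∈ P.D) :
    P.Contract (u ++ [a, b] ++ v) (u ++ [P.pi [a, b]] ++ v) :=
  ⟨u, v, a, b, h, rfl, rfl⟩

/-- Deleting an inserted identity `Π []` is a contraction, provided the result is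
nonempty. -/
theorem cstar_drop_e (u v : List M) (h : u ++ v ≠ []) :
    P.ContractStar (u ++ [P.pi []] ++ v) (u ++ v) := by
  match v with
  | y :: v' =>
    have step := P.contract_pair (a := P.pi []) (b := y) u v' (P.pair_ex_mem y)
    rw [P.pi_pair_ex] at step
    exact Relation.ReflTransGen.single (by simpa using step)
  | [] =>
    have hu : u ≠ [] := by simpa using h
    obtain ⟨u', x, rfl⟩ := List.eq_nil_or_concat u |>.resolve_left hu
    have step := P.contract_pair (a := x) (b := P.pi []) u' [] (P.pair_xe_mem x)
    rw [P.pi_pair_xe] at step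
    exact Relation.ReflTransGen.single (by simpa using step)

/-! ### `w ++ w⁻¹ ⇝* [1]` and `w⁻¹ ++ w ⇝* [1]` -/

theorem wInv_nil : P.wInv [] = [] := rfl

theorem wInv_cons (x : M) (t : List M) : P.wInv (x :: t) = P.wInv t ++ [P.inv x] := by
  simp [PartialGroup.wInv]

theorem wInv_ne_nil {w : List M} (h : w ≠ []) : P.wInv w ≠ [] := by
  simp [PartialGroup.wInv, h]

theorem cstar_self_inv : ∀ w : List M, w ≠ [] → P.ContractStar (w ++ P.wInv w) [P.pi []]
  | [], h => absurd rfl h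
  | [x], _ => by
    have step := P.contract_pair (a := x) (b := P.inv x) [] [] (P.pair_inv_right_mem x)
    rw [P.pi_pair_inv_right] at step
    exact Relation.ReflTransGen.single (by simpa [PartialGroup.wInv] using step)
  | x :: y :: t, _ => by
    have ih := cstar_self_inv (y :: t) (by simp)
    have h1 : P.ContractStar ([x] ++ ((y :: t) ++ P.wInv (y :: t)) ++ [P.inv x])
        ([x] ++ [P.pi []] ++ [P.inv x]) := P.cstar_context [x] [P.inv x] ih
    have h2 : P.ContractStar ([x] ++ [P.pi []] ++ [P.inv x]) ([x] ++ [P.inv x]) :=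
      P.cstar_drop_e [x] [P.inv x] (by simp)
    have h3 : P.Contract ([] ++ [x, P.inv x] ++ []) ([] ++ [P.pi [x, P.inv x]] ++ []) :=
      P.contract_pair [] [] (P.pair_inv_right_mem x)
    rw [P.pi_pair_inv_right] at h3
    have heq : (x :: y :: t) ++ P.wInv (x :: y :: t)
        = [x] ++ ((y :: t) ++ P.wInv (y :: t)) ++ [P.inv x] := by
      rw [P.wInv_cons]; simp
    rw [heq]
    exact (h1.trans h2).trans (Relation.ReflTransGen.single (by simpa using h3))

theorem cstar_inv_self : ∀ w : List M, w ≠ [] → P.ContractStar (P.wInv w ++ w) [P.pi []]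
  | [], h => absurd rfl h
  | [x], _ => by
    have step := P.contract_pair (a := P.inv x) (b := x) [] [] (P.pair_inv_left_mem x)
    rw [P.pi_pair_inv_left] at step
    exact Relation.ReflTransGen.single (by simpa [PartialGroup.wInv] using step)
  | x :: y :: t, _ => by
    have ih := cstar_inv_self (y :: t) (by simp)
    have h3 := P.contract_pair (a := P.inv x) (b := x) (P.wInv (y :: t)) (y :: t)
      (P.pair_inv_left_mem x)
    rw [P.pi_pair_inv_left] at h3
    have h4 : P.ContractStar (P.wInv (y :: t) ++ [P.pi []] ++ (y :: t))
        (P.wInv (y :: t) ++ (y :: t)) := P.cstar_drop_e _ _ (by simp)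
    have heq : P.wInv (x :: y :: t) ++ (x :: y :: t)
        = P.wInv (y :: t) ++ [P.inv x, x] ++ (y :: t) := by
      rw [P.wInv_cons]; simp
    rw [heq]
    exact ((Relation.ReflTransGen.single h3).trans h4).trans ih

/-! ### Words in `D` contract to their product -/

theorem cstar_pi : ∀ w : List M, w ∈ P.D → w ≠ [] → P.ContractStar w [P.pi w]
  | [], _, h => absurd rfl h
  | [x], _, _ => by rw [P.pi_single]; exact .refl
  | a :: b :: t, hD, _ => by
    have hab : [a, b] ∈ P.D := P.mem_D_of_append_left [a, b] t (by simpa using hD)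
    have hD' : (P.pi [a, b] :: t) ∈ P.D := by
      simpa using P.mem_D_contract [] [a, b] t (by simpa using hD)
    have hpi : P.pi (a :: b :: t) = P.pi (P.pi [a, b] :: t) := by
      simpa using P.pi_contract [] [a, b] t (by simpa using hD)
    have step : P.Contract (a :: b :: t) (P.pi [a, b] :: t) := by
      simpa using P.contract_pair [] t hab
    have rest := cstar_pi (P.pi [a, b] :: t) hD' (by simp)
    rw [hpi]
    exact Relation.ReflTransGen.head step rest
termination_by w => w.length

/-! ### Nonemptiness propagation -/

theorem contract_ne_nil {z u : List M} (h : P.Contract z u) : z ≠ [] := by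
  obtain ⟨u', v', a, b, _, hz, _⟩ := h
  subst hz; simp

theorem ne_nil_of_cstar {z u : List M} (h : P.ContractStar z u) (hu : u ≠ []) :
    z ≠ [] := by
  rcases Relation.ReflTransGen.cases_head h with h | ⟨c, hc, _⟩
  · exact h ▸ hu
  · exact P.contract_ne_nil hc

/-! ### Inversion is an anti-homomorphism -/

theorem eq_inv_of_pi_pair {d c : M} (hdc : [d, c] ∈ P.D) (hpi : P.pi [d, c] = P.pi []) :
    d = P.inv c := by
  have hW : [P.inv c, P.inv d, d, c] ∈ P.D := by
    simpa using P.mem_D_inv_append [d, c] hdc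
  have hW2 : [P.inv c, P.inv d, d, c, P.inv c, P.inv d, d, c] ∈ P.D := by
    simpa [P.inv_inv] using P.mem_D_inv_append _ hW
  have hT : [d, c, P.inv c] ∈ P.D := by
    have h1 : [d, c, P.inv c, P.inv d, d, c] ∈ P.D :=
      P.mem_D_of_append_right [P.inv c, P.inv d] [d, c, P.inv c, P.inv d, d, c]
        (by simpa using hW2)
    exact P.mem_D_of_append_left [d, c, P.inv c] [P.inv d, d, c] (by simpa using h1)
  have e1 : P.pi [d, c, P.inv c] = P.inv c := by
    have h := P.pi_contract [] [d, c] [P.inv c] (by simpa using hT)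
    simp at h
    rw [h, hpi, P.pi_pair_ex]
  have e2 : P.pi [d, c, P.inv c] = d := by
    have h := P.pi_contract [d] [c, P.inv c] [] (by simpa using hT)
    simp at h
    rw [h, P.pi_pair_inv_right, P.pi_pair_xe]
  rw [← e2, e1]

theorem pi_inv_pair {a b : M} (h : [a, b] ∈ P.D) :
    [P.inv b, P.inv a] ∈ P.D ∧ P.pi [P.inv b, P.inv a] = P.inv (P.pi [a, b]) := by
  have hW : [P.inv b, P.inv a, a, b] ∈ P.D := by
    simpa using P.mem_D_inv_append [a, b] h
  have hpiW : P.pi [P.inv b, P.inv a, a, b] = P.pi [] := by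
    simpa using P.pi_inv_append [a, b] h
  have hba : [P.inv b, P.inv a] ∈ P.D :=
    P.mem_D_of_append_left [P.inv b, P.inv a] [a, b] (by simpa using hW)
  have h1 : [P.pi [P.inv b, P.inv a], a, b] ∈ P.D := by
    simpa using P.mem_D_contract [] [P.inv b, P.inv a] [a, b] (by simpa using hW)
  have hp1 : P.pi [P.pi [P.inv b, P.inv a], a, b] = P.pi [] := by
    have hc := P.pi_contract [] [P.inv b, P.inv a] [a, b] (by simpa using hW)
    simp at hc
    rw [← hc, hpiW]
  have h2 : [P.pi [P.inv b, P.inv a], P.pi [a, b]] ∈ P.D := by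
    simpa using P.mem_D_contract [P.pi [P.inv b, P.inv a]] [a, b] [] (by simpa using h1)
  have hp2 : P.pi [P.pi [P.inv b, P.inv a], P.pi [a, b]] = P.pi [] := by
    have hc := P.pi_contract [P.pi [P.inv b, P.inv a]] [a, b] [] (by simpa using h1)
    simp at hc
    rw [← hc, hp1]
  exact ⟨hba, P.eq_inv_of_pi_pair h2 hp2⟩

theorem contract_wInv {x y : List M} (h : P.Contract x y) :
    P.Contract (P.wInv x) (P.wInv y) := by
  obtain ⟨u, v, a, b, hab, hx, hy⟩ := h
  obtain ⟨hD', hpi'⟩ := P.pi_inv_pair hab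
  subst hx hy
  exact ⟨P.wInv v, P.wInv u, P.inv b, P.inv a, hD',
    by simp [PartialGroup.wInv], by simp [PartialGroup.wInv, hpi']⟩

theorem cstar_wInv {x y : List M} (h : P.ContractStar x y) :
    P.ContractStar (P.wInv x) (P.wInv y) :=
  Relation.ReflTransGen.lift P.wInv (fun _ _ h => P.contract_wInv h) _ _ h

/-! ### The relation `Rel` (joinable above) and the group construction -/

/-- Two words are related if they have a common `⇝*`-ancestor. -/
def Rel (u v : List M) : Prop := ∃ z, P.ContractStar z u ∧ P.ContractStar z v

theorem rel_refl (u : List M) : P.Rel u u := ⟨u, .refl, .refl⟩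

theorem rel_symm {u v : List M} (h : P.Rel u v) : P.Rel v u :=
  ⟨h.choose, h.choose_spec.2, h.choose_spec.1⟩

theorem rel_trans {u v w : List M} (hv : v ≠ []) (h1 : P.Rel u v) (h2 : P.Rel v w) :
    P.Rel u w := by
  obtain ⟨z1, hz1u, hz1v⟩ := h1
  obtain ⟨z2, hz2v, hz2w⟩ := h2
  have hz1 : z1 ≠ [] := P.ne_nil_of_cstar hz1v hv
  have hz2 : z2 ≠ [] := P.ne_nil_of_cstar hz2v hv
  refine ⟨z1 ++ (P.wInv v ++ z2), ?_, ?_⟩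
  · have s1 : P.ContractStar (z1 ++ (P.wInv v ++ z2)) (z1 ++ (P.wInv v ++ v)) :=
      P.cstar_append_left z1 (P.cstar_append_left (P.wInv v) hz2v)
    have s2 : P.ContractStar (z1 ++ (P.wInv v ++ v)) (z1 ++ [P.pi []]) :=
      P.cstar_append_left z1 (P.cstar_inv_self v hv)
    have s3 : P.ContractStar (z1 ++ [P.pi []]) z1 := by
      simpa using P.cstar_drop_e z1 [] (by simpa using hz1)
    exact ((s1.trans s2).trans s3).trans hz1u
  · have hassoc : z1 ++ (P.wInv v ++ z2) = (z1 ++ P.wInv v) ++ z2 := by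
      rw [List.append_assoc]
    rw [hassoc]
    have s1 : P.ContractStar ((z1 ++ P.wInv v) ++ z2) ((v ++ P.wInv v) ++ z2) :=
      P.cstar_append_right z2 (P.cstar_append_right (P.wInv v) hz1v)
    have s2 : P.ContractStar ((v ++ P.wInv v) ++ z2) ([P.pi []] ++ z2) :=
      P.cstar_append_right z2 (P.cstar_self_inv v hv)
    have s3 : P.ContractStar ([P.pi []] ++ z2) z2 := by
      simpa using P.cstar_drop_e [] z2 (by simpa using hz2)
    exact ((s1.trans s2).trans s3).trans hz2w

theorem rel_append {a b c d : List M} (h1 : P.Rel a b) (h2 : P.Rel c d) :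
    P.Rel (a ++ c) (b ++ d) := by
  obtain ⟨z, hz1, hz2⟩ := h1
  obtain ⟨z', hz1', hz2'⟩ := h2
  exact ⟨z ++ z', P.cstar_append2 hz1 hz1', P.cstar_append2 hz2 hz2'⟩

theorem rel_wInv {u v : List M} (h : P.Rel u v) : P.Rel (P.wInv u) (P.wInv v) := by
  obtain ⟨z, hz1, hz2⟩ := h
  exact ⟨P.wInv z, P.cstar_wInv hz1, P.cstar_wInv hz2⟩

theorem rel_of_contract {u v : List M} (h : P.Contract u v) : P.Rel u v :=
  ⟨u, .refl, Relation.ReflTransGen.single h⟩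

/-- The setoid on nonempty words. -/
def pwSetoid : Setoid {w : List M // w ≠ []} where
  r a b := P.Rel a.1 b.1
  iseqv := ⟨fun a => P.rel_refl a.1, fun h => P.rel_symm h,
    fun {_ b _} h1 h2 => P.rel_trans b.2 h1 h2⟩

/-- The enveloping group: nonempty words modulo `Rel`. -/
def Grp : Type u := Quotient P.pwSetoid

/-- The class of a nonempty word. -/
def Grp.mk (w : List M) (h : w ≠ []) : P.Grp := Quotient.mk P.pwSetoid ⟨w, h⟩

theorem Grp.sound {u v : List M} (hu : u ≠ []) (hv : v ≠ []) (h : P.Rel u v) :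
    Grp.mk P u hu = Grp.mk P v hv := Quotient.sound h

instance : Mul P.Grp :=
  ⟨fun a b => Quotient.liftOn₂ a b
    (fun x y => Grp.mk P (x.1 ++ y.1) (fun hc => x.2 (List.append_eq_nil_iff.mp hc).1))
    (fun _ _ _ _ hx hy => Quotient.sound (P.rel_append hx hy))⟩

instance : One P.Grp := ⟨Grp.mk P [P.pi []] (by simp)⟩

instance : Inv P.Grp :=
  ⟨fun a => Quotient.liftOn a
    (fun x => Grp.mk P (P.wInv x.1) (P.wInv_ne_nil x.2))
    (fun _ _ hx => Quotient.sound (P.rel_wInv hx))⟩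

theorem Grp.mul_mk (u v : List M) (hu : u ≠ []) (hv : v ≠ []) :
    Grp.mk P u hu * Grp.mk P v hv
      = Grp.mk P (u ++ v) (fun hc => hu (List.append_eq_nil_iff.mp hc).1) := rfl

theorem Grp.inv_mk (u : List M) (hu : u ≠ []) :
    (Grp.mk P u hu)⁻¹ = Grp.mk P (P.wInv u) (P.wInv_ne_nil hu) := rfl

instance : Group P.Grp := by
  refine Group.ofLeftAxioms ?_ ?_ ?_
  · intro a b c
    induction a using Quotient.inductionOn with | _ a =>
    induction b using Quotient.inductionOn with | _ b =>
    induction c using Quotient.inductionOn with | _ c =>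
    refine Quotient.sound ⟨(a.1 ++ b.1) ++ c.1, .refl, ?_⟩
    show P.ContractStar ((a.1 ++ b.1) ++ c.1) (a.1 ++ (b.1 ++ c.1))
    rw [List.append_assoc]
    exact Relation.ReflTransGen.refl
  · intro a
    induction a using Quotient.inductionOn with | _ a =>
    refine Quotient.sound ?_
    exact ⟨[P.pi []] ++ a.1, .refl, by simpa using P.cstar_drop_e [] a.1 (by simpa using a.2)⟩
  · intro a
    induction a using Quotient.inductionOn with | _ a =>
    refine Quotient.sound ?_
    exact ⟨P.wInv a.1 ++ a.1, .refl, P.cstar_inv_self a.1 a.2⟩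

/-- The embedding map. -/
def phi (x : M) : P.Grp := Grp.mk P [x] (by simp)

theorem prod_map_phi : ∀ (w : List M) (h : w ≠ []),
    (w.map P.phi).prod = Grp.mk P w h
  | [], h => absurd rfl h
  | [x], _ => by simp [PartialGroup.phi]
  | x :: y :: t, _ => by
    have ih := prod_map_phi (y :: t) (by simp)
    rw [List.map_cons, List.prod_cons, ih]
    rfl

end PartialGroup


/-- (Embeddability criterion.)  A partial group embeds in a group if and only if every
word is kind. -/
theorem embedsInGroup_iff_all_kind {M : Type u} (P : PartialGroup M) :
    P.EmbedsInGroup ↔ ∀ w : List M, P.Kind w := by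
  constructor
  · rintro ⟨G, _, φ, hinj, hom⟩ w f g h1 h2
    have key : ∀ {x y : List M}, P.ContractStar x y →
        (x.map φ).prod = (y.map φ).prod := by
      intro x y h
      induction h with
      | refl => rfl
      | tail _ hstep ih =>
        obtain ⟨u, v, a, b, hab, hx, hy⟩ := hstep
        subst hx hy
        rw [ih]
        simp [List.map_append, List.prod_append, hom _ hab, mul_assoc]
    have hf := key h1
    have hg := key h2
    simp at hf hg
    exact hinj (hf ▸ hg ▸ rfl)
  · intro hkind
    refine ⟨P.Grp, inferInstance, P.phi, ?_, ?_⟩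
    · intro f g hfg
      have h : P.Rel [f] [g] := Quotient.exact hfg
      obtain ⟨z, hz1, hz2⟩ := h
      exact hkind z f g hz1 hz2
    · intro w hw
      by_cases hne : w = []
      · subst hne
        show P.phi (P.pi []) = (1 : P.Grp)
        rfl
      · rw [P.prod_map_phi w hne]
        exact PartialGroup.Grp.sound P (by simp) hne ⟨w, P.cstar_pi w hw hne, .refl⟩
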